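/- Let g ∈ (0,4) and σ ≥ 0. Then 36(1−U)² − g·(3(1−U)+σU)² > 0 for all U ∈ [0, 3/4] if and only if σ < 2/√g − 1. -/

import Mathlib

/-- Let `g ∈ (0,4)` and `σ ≥ 0`. Then
`36(1−U)² − g(3(1−U)+σU)² > 0` for all `U ∈ [0, 3/4]` if and only if `σ < 2/√g − 1`. -/
theorem numerator_positive_iff_sigma_bound (g σ : ℝ) (hg0 : 0 < g) (hg4 : g < 4)
    (hσ : 0 ≤ σ) :
    (∀ U ∈ Set.Icc (0:ℝ) (3 / 4),
        0 < 36 * (1 - U) ^ 2 - g * (3 * (1 - U) + σ * U) ^ 2) ↔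
      σ < 2 / Real.sqrt g - 1 := by
  set s := Real.sqrt g with hs
  have hs0 : 0 < s := Real.sqrt_pos.mpr hg0
  have hssq : s ^ 2 = g := Real.sq_sqrt hg0.le
  constructor
  · intro h
    have h34 := h (3/4) ⟨by norm_num, le_refl _⟩
    have hkey : s * (1 + σ) < 2 := by nlinarith [sq_nonneg (s * (1 + σ) - 2)]
    rw [lt_sub_iff_add_lt, lt_div_iff₀ hs0]
    nlinarith
  · intro h U hU
    obtain ⟨hU0, hU1⟩ := hU
    have hkey : s * (1 + σ) < 2 := by
      rw [lt_sub_iff_add_lt, lt_div_iff₀ hs0] at h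
      nlinarith
    have hg1 : g * (1 + σ) ^ 2 < 4 := by
      nlinarith [mul_nonneg hs0.le (by linarith : (0:ℝ) ≤ 1 + σ)]
    have hA0 : 0 ≤ 3 * (1 - U) + σ * U := by nlinarith
    have hAB : 3 * (1 - U) + σ * U ≤ 3 * (1 + σ) * (1 - U) := by
      nlinarith [mul_nonneg hσ (by linarith : (0:ℝ) ≤ 3 - 4 * U)]
    have hsq : g * (3 * (1 - U) + σ * U) ^ 2 ≤ g * (3 * (1 + σ) * (1 - U)) ^ 2 :=
      mul_le_mul_of_nonneg_left (pow_le_pow_left₀ hA0 hAB 2) hg0.le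
    nlinarith [mul_pos (by nlinarith : (0:ℝ) < 4 - g * (1 + σ) ^ 2)
      (by nlinarith : (0:ℝ) < (1 - U) ^ 2)]
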